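/- Every polytope that is a pyramid (the convex hull of one of its facets together with a single apex vertex outside the affine hull of that facet) is indecomposable. -/

import Mathlib

open Set Pointwise

noncomputable section PolytopeDefs

/-- A `d`-polytope: the convex hull of a finite set of points in `ℝ^d`
whose affine span is all of `ℝ^d`. -/
def IsPolytope {d : ℕ} (P : Set (Fin d → ℝ)) : Prop :=
  ∃ S : Finset (Fin d → ℝ), P = convexHull ℝ (S : Set (Fin d → ℝ)) ∧
    affineSpan ℝ (S : Set (Fin d → ℝ)) = ⊤

/-- The (exposed) faces of `P` having dimension `k`. -/
def facesDim {d : ℕ} (P : Set (Fin d → ℝ)) (k : ℕ) : Set (Set (Fin d → ℝ)) :=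
  {F | IsExposed ℝ P F ∧ F.Nonempty ∧ Module.finrank ℝ (vectorSpan ℝ F) = k}

/-- The vertices of `P`: points forming a 0-dimensional exposed face. -/
def vertexSet {d : ℕ} (P : Set (Fin d → ℝ)) : Set (Fin d → ℝ) :=
  {x | {x} ∈ facesDim P 0}

/-- The edges of `P`: the 1-dimensional exposed faces. -/
def edgeSet {d : ℕ} (P : Set (Fin d → ℝ)) : Set (Set (Fin d → ℝ)) :=
  facesDim P 1

/-- `v(P)`, the number of vertices. -/
def vCount {d : ℕ} (P : Set (Fin d → ℝ)) : ℕ := (vertexSet P).ncard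

/-- `e(P)`, the number of edges. -/
def eCount {d : ℕ} (P : Set (Fin d → ℝ)) : ℕ := (edgeSet P).ncard

/-- The degree of a vertex: the number of edges containing it. -/
def vdegree {d : ℕ} (P : Set (Fin d → ℝ)) (x : Fin d → ℝ) : ℕ :=
  {E ∈ edgeSet P | x ∈ E}.ncard

/-- Two vertices are adjacent when they are joined by an edge. -/
def Adjacent {d : ℕ} (P : Set (Fin d → ℝ)) (x y : Fin d → ℝ) : Prop :=
  x ≠ y ∧ ∃ E ∈ edgeSet P, x ∈ E ∧ y ∈ E

/-- The excess degree `ξ(P) = 2e(P) - d·v(P)`. -/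
def excess {d : ℕ} (P : Set (Fin d → ℝ)) : ℤ :=
  2 * (eCount P : ℤ) - (d : ℤ) * (vCount P : ℤ)

/-- A facet: a `(d-1)`-dimensional face. -/
def IsFacetOf {d : ℕ} (P F : Set (Fin d → ℝ)) : Prop := F ∈ facesDim P (d - 1)

/-- A ridge: a `(d-2)`-dimensional face. -/
def IsRidgeOf {d : ℕ} (P R : Set (Fin d → ℝ)) : Prop := R ∈ facesDim P (d - 2)

/-- The face lattice of `P`: all exposed faces ordered by inclusion
(this includes `∅` and `P` itself). -/
def faceLat {d : ℕ} (P : Set (Fin d → ℝ)) : Set (Set (Fin d → ℝ)) :=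
  {F | IsExposed ℝ P F}

/-- Combinatorial equivalence: the face lattices are order isomorphic. -/
def CombEquiv {d₁ d₂ : ℕ} (P : Set (Fin d₁ → ℝ)) (Q : Set (Fin d₂ → ℝ)) : Prop :=
  Nonempty (↥(faceLat P) ≃o ↥(faceLat Q))

/-- A `k`-dimensional simplex: the convex hull of `k+1` affinely independent points. -/
def IsSimplex {d : ℕ} (k : ℕ) (S : Set (Fin d → ℝ)) : Prop :=
  ∃ p : Fin (k + 1) → (Fin d → ℝ), AffineIndependent ℝ p ∧ S = convexHull ℝ (Set.range p)

/-- `Δ_{m,n}`: the Minkowski sum of an `m`-simplex and an `n`-simplex lying in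
complementary subspaces. -/
def IsDeltaMN {d : ℕ} (m n : ℕ) (Q : Set (Fin d → ℝ)) : Prop :=
  ∃ S T : Set (Fin d → ℝ), IsSimplex m S ∧ IsSimplex n T ∧
    Disjoint (vectorSpan ℝ S) (vectorSpan ℝ T) ∧ Q = S + T

/-- `P` is a pyramid with base `B`: the convex hull of `B` and an apex outside
the affine hull of `B`. -/
def IsPyramidOver {d : ℕ} (P B : Set (Fin d → ℝ)) : Prop :=
  ∃ a : Fin d → ℝ, a ∉ affineSpan ℝ B ∧ P = convexHull ℝ (insert a B)

/-- `P` is an `n`-fold pyramid over `B`. -/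
def IsMultifoldPyramidOver {d : ℕ} : ℕ → Set (Fin d → ℝ) → Set (Fin d → ℝ) → Prop
  | 0, P, B => P = B
  | n + 1, P, B => ∃ Q, IsMultifoldPyramidOver n Q B ∧ IsPyramidOver P Q

/-- The triplex `M_{k,m}`: an `m`-fold pyramid over a simplicial `k`-prism `Δ_{k-1,1}`. -/
def IsTriplex {d : ℕ} (k m : ℕ) (P : Set (Fin d → ℝ)) : Prop :=
  ∃ B, IsDeltaMN (k - 1) 1 B ∧ IsMultifoldPyramidOver m P B

/-- `Q` is obtained from `P` by truncating the vertex `u`: intersecting `P` with a closed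
halfspace whose bounding hyperplane strictly separates `u` from the other vertices. -/
def IsVertexTruncation {d : ℕ} (P : Set (Fin d → ℝ)) (u : Fin d → ℝ)
    (Q : Set (Fin d → ℝ)) : Prop :=
  ∃ (f : (Fin d → ℝ) →ₗ[ℝ] ℝ) (c : ℝ), c < f u ∧
    (∀ x ∈ vertexSet P, x ≠ u → f x < c) ∧ Q = P ∩ {x | f x ≤ c}

/-- `Q` is obtained from `P` by truncating the edge with endpoints `u₀`, `u₁`. -/
def IsEdgeTruncation {d : ℕ} (P : Set (Fin d → ℝ)) (u₀ u₁ : Fin d → ℝ)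
    (Q : Set (Fin d → ℝ)) : Prop :=
  ∃ (f : (Fin d → ℝ) →ₗ[ℝ] ℝ) (c : ℝ), c < f u₀ ∧ c < f u₁ ∧
    (∀ x ∈ vertexSet P, x ≠ u₀ → x ≠ u₁ → f x < c) ∧ Q = P ∩ {x | f x ≤ c}

/-- `A_d`: obtained by truncating the nonsimple vertex of the triplex `M_{2,d-2}`. -/
def IsA (d : ℕ) (Q : Set (Fin d → ℝ)) : Prop :=
  ∃ (P : Set (Fin d → ℝ)) (u : Fin d → ℝ), IsPolytope P ∧ IsTriplex 2 (d - 2) P ∧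
    u ∈ vertexSet P ∧ d < vdegree P u ∧ IsVertexTruncation P u Q

/-- `B_d`: obtained by truncating a simple vertex of the triplex `M_{3,d-3}`. -/
def IsB (d : ℕ) (Q : Set (Fin d → ℝ)) : Prop :=
  ∃ (P : Set (Fin d → ℝ)) (u : Fin d → ℝ), IsPolytope P ∧ IsTriplex 3 (d - 3) P ∧
    u ∈ vertexSet P ∧ vdegree P u = d ∧ IsVertexTruncation P u Q

/-- The `d`-pentasm: obtained by truncating a simple vertex of the triplex `M_{2,d-2}`. -/
def IsPentasm (d : ℕ) (Q : Set (Fin d → ℝ)) : Prop :=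
  ∃ (P : Set (Fin d → ℝ)) (u : Fin d → ℝ), IsPolytope P ∧ IsTriplex 2 (d - 2) P ∧
    u ∈ vertexSet P ∧ vdegree P u = d ∧ IsVertexTruncation P u Q

/-- `C_4`: obtained by truncating an edge of `M_{2,2}` whose endpoints are simple vertices. -/
def IsC4 (Q : Set (Fin 4 → ℝ)) : Prop :=
  ∃ (P : Set (Fin 4 → ℝ)) (u₀ u₁ : Fin 4 → ℝ), IsPolytope P ∧ IsTriplex 2 2 P ∧
    u₀ ∈ vertexSet P ∧ u₁ ∈ vertexSet P ∧ vdegree P u₀ = 4 ∧ vdegree P u₁ = 4 ∧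
    Adjacent P u₀ u₁ ∧ IsEdgeTruncation P u₀ u₁ Q

/-- The standard model of `Σ₄`: the convex hull of the ten points
`{0, e₁, e₂, e₁+e₂} ∪ {e₁+e_k, e₂+e_k, e₁+e₂+2e_k : k = 3,4}` in `ℝ⁴`. -/
def stdSigma4 : Set (Fin 4 → ℝ) :=
  convexHull ℝ
    ({![0,0,0,0], ![1,0,0,0], ![0,1,0,0], ![1,1,0,0],
      ![1,0,1,0], ![0,1,1,0], ![1,1,2,0],
      ![1,0,0,1], ![0,1,0,1], ![1,1,0,2]} : Set (Fin 4 → ℝ))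

/-- `Q` is a translate of a nonnegative scalar multiple of `P`. -/
def Homothet {d : ℕ} (P Q : Set (Fin d → ℝ)) : Prop :=
  ∃ c : ℝ, 0 ≤ c ∧ ∃ t : Fin d → ℝ, Q = (fun x => t + c • x) '' P

/-- `P` is (Minkowski) decomposable: `P = Q + R` for polytopes `Q`, `R` neither of which
is homothetic to `P`. -/
def Decomposable {d : ℕ} (P : Set (Fin d → ℝ)) : Prop :=
  ∃ Q R : Set (Fin d → ℝ),
    (∃ A : Finset (Fin d → ℝ), Q = convexHull ℝ (A : Set (Fin d → ℝ))) ∧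
    (∃ B : Finset (Fin d → ℝ), R = convexHull ℝ (B : Set (Fin d → ℝ))) ∧
    P = Q + R ∧ ¬ Homothet P Q ∧ ¬ Homothet P R

/-- Shephard's property for a facet `F` of `P`: every vertex of `F` lies on exactly one
edge of `P` not contained in `F`. -/
def Shephard {d : ℕ} (P F : Set (Fin d → ℝ)) : Prop :=
  ∀ u ∈ vertexSet F, {E ∈ edgeSet P | u ∈ E ∧ ¬ E ⊆ F}.ncard = 1

end PolytopeDefs

section Aux

variable {d : ℕ}

private lemma aux_ub (C : Finset (Fin d → ℝ)) (hC : C.Nonempty) (h : (Fin d → ℝ) →L[ℝ] ℝ) :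
    ∀ x ∈ convexHull ℝ (C : Set (Fin d → ℝ)), h x ≤ C.sup' hC ⇑h := by
  intro x hx
  refine convexHull_min (fun y hy => ?_) (convex_halfSpace_le ⟨h.map_add, h.map_smul⟩ _) hx
  exact Finset.le_sup' (⇑h) hy

private lemma aux_at (C : Finset (Fin d → ℝ)) (hC : C.Nonempty) (h : (Fin d → ℝ) →L[ℝ] ℝ) :
    ∃ x ∈ convexHull ℝ (C : Set (Fin d → ℝ)), h x = C.sup' hC ⇑h := by
  obtain ⟨i, hi, he⟩ := C.exists_mem_eq_sup' hC ⇑h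
  exact ⟨i, subset_convexHull ℝ _ hi, he.symm⟩

end Aux

theorem stmt11 (d : ℕ) (P : Set (Fin d → ℝ)) (hP : IsPolytope P)
    (F : Set (Fin d → ℝ)) (hF : IsFacetOf P F) (hpyr : IsPyramidOver P F) :
    ¬ Decomposable P := by
  rintro ⟨Q, R, ⟨A, hQA⟩, ⟨B, hRB⟩, hPQR, hQh, -⟩
  obtain ⟨hFexp, hFne, -⟩ := hF
  obtain ⟨a, haF, hPa⟩ := hpyr
  obtain ⟨l, hl⟩ := hFexp hFne
  obtain ⟨z₀, hz₀⟩ := hFne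
  have hz₀F : z₀ ∈ P ∧ ∀ y ∈ P, l y ≤ l z₀ := by rw [hl] at hz₀; exact hz₀
  set c : ℝ := l z₀ with hc_def
  have hPconv : Convex ℝ P := hPa ▸ convex_convexHull ℝ _
  have hFeq : F = {x | x ∈ P ∧ l x = c} := by
    rw [hl]; ext x
    simp only [mem_setOf_eq, mem_sep_iff]
    constructor
    · rintro ⟨hxP, hmax⟩
      exact ⟨hxP, le_antisymm (hz₀F.2 x hxP) (hmax z₀ hz₀F.1)⟩
    · rintro ⟨hxP, hxc⟩
      exact ⟨hxP, fun y hy => (hz₀F.2 y hy).trans hxc.ge⟩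
  have hFconv : Convex ℝ F := by
    rw [hFeq]
    exact hPconv.inter (convex_hyperplane ⟨l.map_add, l.map_smul⟩ c)
  have haP : a ∈ P := hPa ▸ subset_convexHull ℝ _ (mem_insert a F)
  have hla : l a < c := by
    rcases lt_or_eq_of_le (hz₀F.2 a haP) with h | h
    · exact h
    · exact absurd (subset_affineSpan ℝ F (by rw [hFeq]; exact ⟨haP, h⟩)) haF
  have hPmem : P = convexJoin ℝ {a} F := by
    rw [hPa, convexHull_insert ⟨z₀, hz₀⟩, hFconv.convexHull_eq]
  -- cone lemma
  have cone : ∀ γ : ℝ, 0 ≤ γ → ∀ x ∈ P, l x ≤ l a + γ * (c - l a) →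
      ∃ p ∈ P, x = a + γ • (p - a) := by
    intro γ hγ x hx hlx
    rw [hPmem, mem_convexJoin] at hx
    obtain ⟨b, hb, z, hz, hseg⟩ := hx
    rw [mem_singleton_iff] at hb
    rw [hb, segment_eq_image'] at hseg
    obtain ⟨t, ⟨ht0, ht1⟩, rfl⟩ := hseg
    have hlz : l z = c := by rw [hFeq] at hz; exact hz.2
    have hlz2 : l (a + t • (z - a)) ≤ l a + γ * (c - l a) := hlx
    have hlval : l (a + t • (z - a)) = l a + t * (c - l a) := by
      simp only [map_add, map_smul, map_sub, smul_eq_mul]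
      rw [hlz]
    rw [hlval] at hlz2
    have htγ : t ≤ γ := by nlinarith
    rcases hγ.eq_or_lt with hγ0 | hγpos
    · have ht : t = 0 := le_antisymm (hγ0 ▸ htγ) ht0
      exact ⟨a, haP, by rw [ht, ← hγ0]; simp⟩
    · refine ⟨a + (t / γ) • (z - a), ?_, ?_⟩
      · rw [hPmem, mem_convexJoin]
        refine ⟨a, mem_singleton a, z, hz, ?_⟩
        rw [segment_eq_image']
        exact ⟨t / γ, ⟨div_nonneg ht0 hγpos.le, (div_le_one hγpos).2 htγ⟩, rfl⟩
      · rw [add_sub_cancel_left, smul_smul, mul_div_cancel₀ _ hγpos.ne']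
  -- decompose the apex
  have haQR : a ∈ Q + R := hPQR ▸ haP
  obtain ⟨q₀, hq₀, r₀, hr₀, hqr⟩ := Set.mem_add.mp haQR
  have hAne : A.Nonempty :=
    Finset.coe_nonempty.mp (convexHull_nonempty_iff.mp ⟨q₀, hQA ▸ hq₀⟩)
  have hBne : B.Nonempty :=
    Finset.coe_nonempty.mp (convexHull_nonempty_iff.mp ⟨r₀, hRB ▸ hr₀⟩)
  have hla' : l q₀ + l r₀ = l a := by rw [← hqr, map_add]
  have hδ : (0:ℝ) < c - l a := by linarith
  -- maxima of l over Q and R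
  set MQ : ℝ := A.sup' hAne ⇑l with hMQ_def
  set MR : ℝ := B.sup' hBne ⇑l with hMR_def
  have hubQ : ∀ x ∈ Q, l x ≤ MQ := fun x hx => aux_ub A hAne l x (hQA ▸ hx)
  have hubR : ∀ x ∈ R, l x ≤ MR := fun x hx => aux_ub B hBne l x (hRB ▸ hx)
  have hc : MQ + MR = c := by
    apply le_antisymm
    · obtain ⟨xq, hxq, hexq⟩ := aux_at A hAne l
      obtain ⟨xr, hxr, hexr⟩ := aux_at B hBne l
      have hmem : xq + xr ∈ P := by
        rw [hPQR]; exact Set.add_mem_add (hQA ▸ hxq) (hRB ▸ hxr)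
      have := hz₀F.2 _ hmem
      rw [map_add, hexq, hexr] at this
      exact this
    · have hz₀P : z₀ ∈ Q + R := hPQR ▸ hz₀F.1
      obtain ⟨q, hq, r, hr, hqrz⟩ := Set.mem_add.mp hz₀P
      have : l q + l r = c := by rw [← map_add, hqrz]
      have h1 := hubQ q hq
      have h2 := hubR r hr
      linarith
  set α : ℝ := (MQ - l q₀) / (c - l a) with hα_def
  set β : ℝ := (MR - l r₀) / (c - l a) with hβ_def
  have hα : 0 ≤ α := div_nonneg (by linarith [hubQ q₀ hq₀]) hδ.le
  have hβ : 0 ≤ β := div_nonneg (by linarith [hubR r₀ hr₀]) hδ.le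
  have hαδ : α * (c - l a) = MQ - l q₀ := div_mul_cancel₀ _ hδ.ne'
  have hβδ : β * (c - l a) = MR - l r₀ := div_mul_cancel₀ _ hδ.ne'
  have hαβ : α + β = 1 := by
    rw [hα_def, hβ_def, ← add_div]
    rw [show MQ - l q₀ + (MR - l r₀) = c - l a by linarith]
    exact div_self hδ.ne'
  -- inclusion of summands in homothets
  have incl : ∀ (x₀ w₀ : Fin d → ℝ) (γ : ℝ), x₀ + w₀ = a → 0 ≤ γ →
      ∀ q, q + w₀ ∈ P → l q ≤ l x₀ + γ * (c - l a) →
      ∃ p ∈ P, q = (x₀ - γ • a) + γ • p := by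
    intro x₀ w₀ γ hsum hγ q hqP hlq
    have hx : l (q + w₀) ≤ l a + γ * (c - l a) := by
      have : l x₀ + l w₀ = l a := by rw [← hsum, map_add]
      rw [map_add]; linarith
    obtain ⟨p, hp, hep⟩ := cone γ hγ _ hqP hx
    refine ⟨p, hp, ?_⟩
    have h1 : q = a + γ • (p - a) - w₀ := eq_sub_of_add_eq hep
    have h2 : x₀ = a - w₀ := eq_sub_of_add_eq hsum
    rw [h1, h2, smul_sub]; abel
  have keyQ : ∀ q ∈ Q, ∃ p ∈ P, q = (q₀ - α • a) + α • p := by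
    intro q hq
    refine incl q₀ r₀ α hqr hα q ?_ (by linarith [hubQ q hq])
    rw [hPQR]; exact Set.add_mem_add hq hr₀
  have keyR : ∀ r ∈ R, ∃ p ∈ P, r = (r₀ - β • a) + β • p := by
    intro r hr
    refine incl r₀ q₀ β (by rw [add_comm]; exact hqr) hβ r ?_ (by linarith [hubR r hr])
    have hm : q₀ + r ∈ Q + R := Set.add_mem_add hq₀ hr
    rw [hPQR, show r + q₀ = q₀ + r from add_comm r q₀]; exact hm
  -- the upper bound over P
  have hPub : ∀ (h : (Fin d → ℝ) →L[ℝ] ℝ), ∀ x ∈ P,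
      h x ≤ A.sup' hAne ⇑h + B.sup' hBne ⇑h := by
    intro h x hx
    obtain ⟨q, hq, r, hr, hqrx⟩ := Set.mem_add.mp (hPQR ▸ hx)
    have h1 := aux_ub A hAne h q (hQA ▸ hq)
    have h2 := aux_ub B hBne h r (hRB ▸ hr)
    calc h x = h q + h r := by rw [← map_add, hqrx]
      _ ≤ _ := add_le_add h1 h2
  -- conclude: Q is a homothet of P
  apply hQh
  refine ⟨α, hα, q₀ - α • a, ?_⟩
  ext y
  constructor
  · intro hy
    obtain ⟨p, hp, hep⟩ := keyQ y hy
    exact ⟨p, hp, hep.symm⟩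
  · rintro ⟨p, hp, rfl⟩
    by_contra hy
    have hQconv : Convex ℝ Q := hQA ▸ convex_convexHull ℝ _
    have hQcl : IsClosed Q := hQA ▸ A.finite_toSet.isClosed_convexHull (𝕜 := ℝ)
    obtain ⟨h, u, hQu, huy⟩ := geometric_hahn_banach_closed_point hQconv hQcl hy
    set MQh : ℝ := A.sup' hAne ⇑h with hMQh_def
    set MRh : ℝ := B.sup' hBne ⇑h with hMRh_def
    have hMP : h a ≤ MQh + MRh := hPub h a haP
    -- (1) MQh < u
    have h1 : MQh < u := by
      obtain ⟨xq, hxq, hexq⟩ := aux_at A hAne h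
      have := hQu xq (hQA ▸ hxq)
      linarith [hexq ▸ this]
    -- (2) u < h q₀ + α * (MQh + MRh - h a)
    have h2 : u < h q₀ + α * (MQh + MRh - h a) := by
      have hval : h ((q₀ - α • a) + α • p) = h q₀ + α * (h p - h a) := by
        simp [map_add, map_sub, map_smul, smul_eq_mul]; ring
      have hbound : α * (h p - h a) ≤ α * (MQh + MRh - h a) :=
        mul_le_mul_of_nonneg_left (by linarith [hPub h p hp]) hα
      rw [hval] at huy
      linarith
    -- (3) MRh ≤ h r₀ + β * (MQh + MRh - h a)
    have h3 : MRh ≤ h r₀ + β * (MQh + MRh - h a) := by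
      obtain ⟨xr, hxr, hexr⟩ := aux_at B hBne h
      obtain ⟨p', hp', hep'⟩ := keyR xr (hRB ▸ hxr)
      have hval : h xr = h r₀ + β * (h p' - h a) := by
        rw [hep']; simp [map_add, map_sub, map_smul, smul_eq_mul]; ring
      have hbound : β * (h p' - h a) ≤ β * (MQh + MRh - h a) :=
        mul_le_mul_of_nonneg_left (by linarith [hPub h p' hp']) hβ
      have h5 : h xr = MRh := hexr.trans hMRh_def.symm
      linarith [hval, h5]
    have hsum : h q₀ + h r₀ = h a := by rw [← hqr, map_add]
    nlinarith [hαβ]
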